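/- arXiv:1309.3595 — 3 statements merged into one kernel-verified Lean document; each statement's English description precedes it below -/
import Mathlib

section
/- Let χ be a Dirichlet character modulo q taking values in the unit circle together with 0, and suppose x ≥ 100. Then Re ∑_{n ≤ x} Λ(n)·χ(n)·(1/(n·log n) − 1/(x·log x)) ≥ ∑_{p^k ≤ x} Λ(p^k)·(−1)^k·(1/(p^k·log p^k) − 1/(x·log x)), where the right-hand sum runs over prime powers p^k ≤ x. -/
open Finset ArithmeticFunction

lemma aux_norm_one_sub_pow (v : ℂ) (hv : ‖v‖ ≤ 1) (m : ℕ) :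
    ‖1 - v ^ m‖ ≤ m * ‖1 - v‖ := by
  induction m with
  | zero => simp
  | succ n ih =>
    have h : 1 - v ^ (n + 1) = (1 - v ^ n) + v ^ n * (1 - v) := by ring
    have hvn : ‖v ^ n‖ ≤ 1 := by
      calc ‖v ^ n‖ = ‖v‖ ^ n := norm_pow _ _
        _ ≤ 1 ^ n := pow_le_pow_left₀ (norm_nonneg _) hv n
        _ = 1 := one_pow n
    rw [h]
    calc ‖(1 - v ^ n) + v ^ n * (1 - v)‖ ≤ ‖1 - v ^ n‖ + ‖v ^ n * (1 - v)‖ := norm_add_le _ _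
      _ ≤ n * ‖1 - v‖ + ‖v ^ n‖ * ‖1 - v‖ := by rw [norm_mul]; exact add_le_add ih le_rfl
      _ ≤ n * ‖1 - v‖ + 1 * ‖1 - v‖ :=
          add_le_add le_rfl (mul_le_mul_of_nonneg_right hvn (norm_nonneg _))
      _ = (n + 1 : ℕ) * ‖1 - v‖ := by push_cast; ring

lemma aux_geom_sum (y : ℝ) (hy1 : y < 1) (L : ℕ) :
    ∑ m ∈ Icc 1 L, (m : ℝ) * y ^ m
      + y ^ (L + 1) * (((L : ℝ) + 1) / (1 - y) + y / (1 - y) ^ 2) = y / (1 - y) ^ 2 := by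
  have h1 : (1 : ℝ) - y ≠ 0 := by linarith
  induction L with
  | zero => simp; field_simp; ring
  | succ n ih =>
    rw [Finset.sum_Icc_succ_top (by omega)]
    push_cast
    rw [show n + 1 + 1 = (n + 1) + 1 from rfl, pow_succ y (n+1)]
    field_simp at ih ⊢
    nlinarith [ih]

lemma aux_re_pow2 (u : ℂ) : (u^2).re = u.re^2 - u.im^2 := by
  rw [sq]; simp [Complex.mul_re]; ring
lemma aux_re_pow3 (u : ℂ) : (u^3).re = u.re^3 - 3*u.re*u.im^2 := by
  have h : u^3 = u*u*u := by ring
  rw [h]; simp [Complex.mul_re, Complex.mul_im]; ring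
lemma aux_re_pow4 (u : ℂ) : (u^4).re = u.re^4 - 6*u.re^2*u.im^2 + u.im^4 := by
  have h : u^4 = u*u*u*u := by ring
  rw [h]; simp [Complex.mul_re, Complex.mul_im]; ring
lemma aux_re_pow5 (u : ℂ) : (u^5).re = u.re^5 - 10*u.re^3*u.im^2 + 5*u.re*u.im^4 := by
  have h : u^5 = u*u*u*u*u := by ring
  rw [h]; simp [Complex.mul_re, Complex.mul_im]; ring
lemma aux_re_pow6 (u : ℂ) :
    (u^6).re = u.re^6 - 15*u.re^4*u.im^2 + 15*u.re^2*u.im^4 - u.im^6 := by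
  have h : u^6 = u*u*u*u*u*u := by ring
  rw [h]; simp [Complex.mul_re, Complex.mul_im]; ring

lemma aux_rho2 (u : ℂ) (hB : u.im^2 = 1 - u.re^2) :
    1 - (u^2).re = 2*(1-u.re)*(2-(1-u.re)) := by
  linear_combination (-1) * aux_re_pow2 u + hB
lemma aux_rho3 (u : ℂ) (hB : u.im^2 = 1 - u.re^2) :
    1 - (u^3).re = (1-u.re)*(3-2*(1-u.re))^2 := by
  linear_combination (-1) * aux_re_pow3 u + (3*u.re)*hB
lemma aux_rho4 (u : ℂ) (hB : u.im^2 = 1 - u.re^2) :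
    1 - (u^4).re = (2*(1-u.re)*(2-(1-u.re))) * (4*(1-(1-u.re))^2) := by
  linear_combination (-1) * aux_re_pow4 u + (-(u.im^2)+7*u.re^2-1)*hB
lemma aux_rho5 (u : ℂ) (hB : u.im^2 = 1 - u.re^2) :
    1 - (u^5).re = (1-u.re)*(4*(1-u.re)^2-10*(1-u.re)+5)^2 := by
  linear_combination (-1) * aux_re_pow5 u + (-5*u.re*u.im^2+15*u.re^3-5*u.re)*hB
lemma aux_rho6 (u : ℂ) (hB : u.im^2 = 1 - u.re^2) :
    1 - (u^6).re = (2*(1-u.re)*(2-(1-u.re))) * (4*(1-(1-u.re))^2-1)^2 := by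
  linear_combination (-1) * aux_re_pow6 u + (u.im^4-(16*u.re^2-1)*u.im^2+31*u.re^4-17*u.re^2+1)*hB

lemma aux_poly2 (r : ℝ) (h0 : 0 ≤ r) (h2 : r ≤ 2) :
    2*(2-r)*(1/8 + (1/64)*(4*(1-r)^2) + (1/384)*(4*(1-r)^2-1)^2 + 13/1152)
      ≤ 191/384 + (5/128)*(3-2*r)^2 + (7/1920)*(4*r^2-10*r+5)^2 := by
  nlinarith [sq_nonneg r, sq_nonneg (r-1), sq_nonneg (r-2), mul_nonneg h0 (sub_nonneg.2 h2),
    sq_nonneg (r*(r-1)), sq_nonneg (r*(r-2)), sq_nonneg ((r-1)*(r-2)),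
    mul_nonneg (mul_nonneg h0 h0) (sub_nonneg.2 h2), sq_nonneg (r^2-2*r),
    mul_nonneg (mul_nonneg h0 (sub_nonneg.2 h2)) (sq_nonneg (r-1))]

lemma aux_poly3 (P : ℝ) (hP : 3 ≤ P) :
    2*(1/P^2)/(1-1/P^2)^2 ≤ 1/P - 1/(4*P^4) := by
  have hP0 : 0 < P := by linarith
  have h1 : (0:ℝ) < P^2 - 1 := by nlinarith
  have h2 : (0:ℝ) < 1 - 1/P^2 := by
    have : 1/P^2 < 1 := by rw [div_lt_one (by positivity)]; nlinarith
    linarith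
  have key : 8*P^6 ≤ (4*P^3-1)*(P^2-1)^2 := by
    nlinarith [mul_nonneg (sub_nonneg.2 hP) (pow_nonneg hP0.le 6),
      mul_nonneg (sub_nonneg.2 hP) (pow_nonneg hP0.le 5),
      mul_nonneg (sub_nonneg.2 hP) (pow_nonneg hP0.le 4),
      mul_nonneg (sub_nonneg.2 hP) (pow_nonneg hP0.le 3), pow_pos hP0 2, pow_pos hP0 3]
  have e1 : 2*(1/P^2)/(1-1/P^2)^2 = 2*P^2/(P^2-1)^2 := by
    rw [div_eq_div_iff (pow_pos h2 2).ne' (by positivity)]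
    field_simp
  have e2 : 1/P - 1/(4*P^4) = (4*P^3-1)/(4*P^4) := by
    field_simp
  rw [e1, e2, div_le_div_iff₀ (by positivity) (by positivity)]
  nlinarith

lemma aux_evens_eq (K : ℕ) :
    (Icc 1 K).filter (fun k => ¬ Odd k) = (Icc 1 (K/2)).image (fun m => 2*m) := by
  ext k
  simp only [mem_filter, mem_Icc, mem_image, Nat.not_odd_iff_even, Nat.even_iff]
  constructor
  · rintro ⟨⟨h1, h2⟩, h3⟩
    exact ⟨k/2, ⟨by omega, by omega⟩, by omega⟩
  · rintro ⟨m, ⟨h1, h2⟩, rfl⟩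
    omega

lemma aux_core_zero (P : ℝ) (hP : 2 ≤ P) (K : ℕ) (c : ℝ)
    (hbK : ∀ k ∈ Icc 1 K, 0 ≤ 1/(k*P^k) - c) :
    0 ≤ ∑ k ∈ Icc 1 K, (1/(k*P^k) - c) * (0 - (-1:ℝ)^k) := by
  have hP0 : (0:ℝ) < P := by linarith
  set b : ℕ → ℝ := fun k => 1/(k*P^k) - c with hb
  rw [← Finset.sum_filter_add_sum_filter_not (Icc 1 K) Odd]
  have h1 : ∑ k ∈ (Icc 1 K).filter (fun k => Odd k), b k * (0 - (-1:ℝ)^k)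
      = ∑ k ∈ (Icc 1 K).filter (fun k => Odd k), b k := by
    refine Finset.sum_congr rfl fun k hk => ?_
    have hodd : Odd k := (mem_filter.mp hk).2
    rw [hodd.neg_one_pow]; ring
  have h2 : ∑ k ∈ (Icc 1 K).filter (fun k => ¬ Odd k), b k * (0 - (-1:ℝ)^k)
      = - ∑ m ∈ Icc 1 (K/2), b (2*m) := by
    rw [aux_evens_eq, Finset.sum_image (fun a _ b _ h => by omega)]
    rw [← Finset.sum_neg_distrib]
    refine Finset.sum_congr rfl fun m hm => ?_
    have : Even (2*m) := ⟨m, by ring⟩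
    rw [Even.neg_one_pow this]; ring
  rw [h1, h2]
  have key : ∑ m ∈ Icc 1 (K/2), b (2*m) ≤ ∑ k ∈ (Icc 1 K).filter (fun k => Odd k), b k := by
    calc ∑ m ∈ Icc 1 (K/2), b (2*m) ≤ ∑ m ∈ Icc 1 (K/2), b (2*m - 1) := by
          refine Finset.sum_le_sum fun m hm => ?_
          have hm1 : 1 ≤ m := (mem_Icc.mp hm).1
          have hm2 : m ≤ K/2 := (mem_Icc.mp hm).2
          have e1 : ((2*m - 1 : ℕ):ℝ) * P^(2*m-1) ≤ ((2*m : ℕ):ℝ) * P^(2*m) := by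
            have h1 : ((2*m - 1 : ℕ):ℝ) ≤ ((2*m : ℕ):ℝ) := by exact_mod_cast by omega
            have h2 : P^(2*m-1) ≤ P^(2*m) := pow_le_pow_right₀ (by linarith) (by omega)
            exact mul_le_mul h1 h2 (by positivity) (by positivity)
          have hpos : (0:ℝ) < ((2*m - 1 : ℕ):ℝ) * P^(2*m-1) := by
            have : (0:ℝ) < ((2*m - 1 : ℕ):ℝ) := by exact_mod_cast by omega
            positivity
          simp only [hb]
          have := one_div_le_one_div_of_le hpos e1
          push_cast at this ⊢
          linarith
      _ ≤ ∑ k ∈ (Icc 1 K).filter (fun k => Odd k), b k := by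
          rw [show ∑ m ∈ Icc 1 (K/2), b (2*m-1)
              = ∑ k ∈ (Icc 1 (K/2)).image (fun m => 2*m-1), b k from
            (Finset.sum_image (fun a _ b _ h => by omega)).symm]
          refine Finset.sum_le_sum_of_subset_of_nonneg ?_ fun k hk _ => hbK k (mem_filter.mp hk).1
          intro k hk
          simp only [mem_image, mem_Icc] at hk
          obtain ⟨m, ⟨hm1, hm2⟩, rfl⟩ := hk
          simp only [mem_filter, mem_Icc]
          exact ⟨⟨by omega, by omega⟩, ⟨m-1, by omega⟩⟩
  linarith

lemma aux_norm_sq_two_sub (v : ℂ) (hv : ‖v‖ = 1) : ‖1 - v‖^2 = 2*(1 - v.re) := by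
  have habs : ‖v‖ = 1 := hv
  have h1 := Complex.sq_norm v
  rw [habs, Complex.normSq_apply] at h1
  have h2 : ‖1 - v‖^2 = Complex.normSq (1 - v) := by
    rw [Complex.sq_norm]
  rw [h2, Complex.normSq_apply]
  simp only [Complex.sub_re, Complex.sub_im, Complex.one_re, Complex.one_im]
  nlinarith [h1]

lemma aux_rho_le (u : ℂ) (hu : ‖u‖ = 1) (m : ℕ) :
    1 - (u^(2*m)).re ≤ (m:ℝ)^2 * (1 - (u^2).re) := by
  have hw : ‖u^2‖ = 1 := by rw [norm_pow, hu, one_pow]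
  have hwm : ‖(u^2)^m‖ = 1 := by rw [norm_pow, hw, one_pow]
  have h := aux_norm_one_sub_pow (u^2) hw.le m
  have hsq : ‖1 - (u^2)^m‖^2 ≤ ((m:ℝ) * ‖1 - u^2‖)^2 := by
    exact pow_le_pow_left₀ (norm_nonneg _) h 2
  rw [aux_norm_sq_two_sub _ hwm, mul_pow, aux_norm_sq_two_sub _ hw] at hsq
  rw [pow_mul]
  nlinarith [hsq]

set_option maxHeartbeats 2000000 in
lemma aux_core_unit (P : ℝ) (hP : 2 ≤ P) (K : ℕ) (hK : 1 ≤ K) (c : ℝ) (hc : 0 ≤ c)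
    (b : ℕ → ℝ) (hbdef : ∀ k : ℕ, b k = 1/(k*P^k) - c)
    (hbK : ∀ k ∈ Icc 1 K, 0 ≤ b k)
    (z : ℂ) (hz : ‖z‖ = 1)
    (hcase : 3 ≤ P ∨ (P = 2 ∧ 6 ≤ K)) :
    0 ≤ ∑ k ∈ Icc 1 K, b k * ((z^k).re - (-1:ℝ)^k) := by
  have hP0 : (0:ℝ) < P := by linarith
  obtain ⟨u, hudef⟩ : ∃ u : ℂ, u = -z := ⟨-z, rfl⟩
  have hu : ‖u‖ = 1 := by rw [hudef, norm_neg]; exact hz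
  have habs : ‖u‖ = 1 := hu
  have h1 := Complex.sq_norm u
  rw [habs, Complex.normSq_apply] at h1
  have hB : u.im^2 = 1 - u.re^2 := by nlinarith [h1]
  have hre : |u.re| ≤ 1 := by
    have := Complex.abs_re_le_norm u; rwa [habs] at this
  have hr0 : 0 ≤ 1 - u.re := by have := (abs_le.mp hre).2; linarith
  have hr2 : 1 - u.re ≤ 2 := by have := (abs_le.mp hre).1; linarith
  have hρnn : ∀ k : ℕ, 0 ≤ 1 - (u^k).re := by
    intro k
    have h2 : ‖u^k‖ = 1 := by rw [norm_pow, habs, one_pow]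
    have := Complex.re_le_norm (u^k); rw [h2] at this; linarith
  have hterm : ∀ k : ℕ, (z^k).re - (-1:ℝ)^k = (-1:ℝ)^(k+1) * (1 - (u^k).re) := by
    intro k
    have hzk : z^k = (-1:ℂ)^k * u^k := by
      rw [show z = -u by rw [hudef, neg_neg], neg_pow]
    rcases Nat.even_or_odd k with hpar | hpar
    · rw [hpar.neg_one_pow, one_mul] at hzk
      rw [hzk, Even.neg_one_pow hpar, Odd.neg_one_pow hpar.add_one]; ring
    · rw [hpar.neg_one_pow, neg_one_mul] at hzk
      rw [hzk, Complex.neg_re, Odd.neg_one_pow hpar, Even.neg_one_pow hpar.add_one]; ring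
  have hsum : ∑ k ∈ Icc 1 K, b k * ((z^k).re - (-1:ℝ)^k)
      = ∑ k ∈ Icc 1 K, (-1:ℝ)^(k+1) * (b k * (1 - (u^k).re)) := by
    refine Finset.sum_congr rfl fun k _ => ?_
    rw [hterm k]; ring
  rw [hsum, ← Finset.sum_filter_add_sum_filter_not (Icc 1 K) Odd]
  obtain ⟨L, hLdef⟩ : ∃ L : ℕ, L = K / 2 := ⟨K/2, rfl⟩
  have hbnn : ∀ m ∈ Icc 1 L, 0 ≤ b (2*m) := by
    intro m hm
    have := mem_Icc.mp hm
    exact hbK (2*m) (mem_Icc.mpr ⟨by omega, by omega⟩)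
  have hOddpart : ∑ k ∈ (Icc 1 K).filter (fun k => Odd k),
        (-1:ℝ)^(k+1) * (b k * (1 - (u^k).re))
      = ∑ k ∈ (Icc 1 K).filter (fun k => Odd k), b k * (1 - (u^k).re) := by
    refine Finset.sum_congr rfl fun k hk => ?_
    have hodd : Odd k := (mem_filter.mp hk).2
    rw [Even.neg_one_pow hodd.add_one]; ring
  have hEvenpart : ∑ k ∈ (Icc 1 K).filter (fun k => ¬ Odd k),
        (-1:ℝ)^(k+1) * (b k * (1 - (u^k).re))
      = - ∑ m ∈ Icc 1 L, b (2*m) * (1 - (u^(2*m)).re) := by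
    rw [hLdef, aux_evens_eq, Finset.sum_image (fun a _ b _ h => by omega),
      ← Finset.sum_neg_distrib]
    refine Finset.sum_congr rfl fun m hm => ?_
    have : Odd (2*m+1) := ⟨m, by ring⟩
    rw [Odd.neg_one_pow this]; ring
  rw [hOddpart, hEvenpart]
  obtain ⟨M, hMdef⟩ : ∃ M : ℝ, M = ∑ m ∈ Icc 1 L, (m:ℝ)^2 * b (2*m) := ⟨_, rfl⟩
  have hM0 : 0 ≤ M := hMdef ▸ Finset.sum_nonneg fun m hm => mul_nonneg (by positivity) (hbnn m hm)
  have hEb : ∑ m ∈ Icc 1 L, b (2*m) * (1 - (u^(2*m)).re) ≤ (1 - (u^2).re) * M := by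
    rw [hMdef]
    calc ∑ m ∈ Icc 1 L, b (2*m) * (1 - (u^(2*m)).re)
        ≤ ∑ m ∈ Icc 1 L, b (2*m) * ((m:ℝ)^2 * (1 - (u^2).re)) :=
          Finset.sum_le_sum fun m hm =>
            mul_le_mul_of_nonneg_left (aux_rho_le u hu m) (hbnn m hm)
      _ = (1 - (u^2).re) * ∑ m ∈ Icc 1 L, (m:ℝ)^2 * b (2*m) := by
          rw [Finset.mul_sum]; exact Finset.sum_congr rfl fun m _ => by ring
  have hb1 : b 1 = 1/P - c := by rw [hbdef]; norm_num
  rcases hcase with hP3 | ⟨hP2, hK6⟩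
  · -- case P ≥ 3
    have hSodd : b 1 * (1 - (u^1).re)
        ≤ ∑ k ∈ (Icc 1 K).filter (fun k => Odd k), b k * (1 - (u^k).re) := by
      refine Finset.single_le_sum (f := fun k => b k * (1 - (u^k).re))
        (fun i hi => mul_nonneg (hbK i (mem_filter.mp hi).1) (hρnn i)) ?_
      exact mem_filter.mpr ⟨mem_Icc.mpr ⟨le_rfl, hK⟩, odd_one⟩
    have hM4 : 4 * M ≤ b 1 := by
      rcases Nat.lt_or_ge L 2 with hL2 | hL2
      · interval_cases L
        · rw [hMdef]
          simp only [show Icc 1 0 = (∅ : Finset ℕ) from rfl, Finset.sum_empty]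
          have := hbK 1 (mem_Icc.mpr ⟨le_rfl, hK⟩)
          linarith
        · rw [hMdef, show Icc 1 1 = {1} from rfl, Finset.sum_singleton]
          have hb2 : b (2*1) = 1/(2*P^2) - c := by rw [hbdef]; push_cast; norm_num
          rw [hb2, hb1]
          have h2P : 2/P^2 ≤ 1/P := by
            rw [div_le_div_iff₀ (by positivity) (by positivity)]; nlinarith
          have e : (4:ℝ)*(((1:ℕ):ℝ)^2*(1/(2*P^2) - c)) = 2/P^2 - 4*c := by
            push_cast; field_simp; ring
          linarith
      · have hK4 : 4 ≤ K := by omega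
        have hb4 : b 4 = 1/(4*P^4) - c := by rw [hbdef]; push_cast; norm_num
        have hc4 : c ≤ 1/(4*P^4) := by
          have h := hbK 4 (mem_Icc.mpr ⟨by omega, hK4⟩)
          rw [hb4] at h; linarith
        have hy1 : (1:ℝ)/P^2 < 1 := by rw [div_lt_one (by positivity)]; nlinarith
        have hMle : M ≤ (1/2) * ((1/P^2) / (1 - 1/P^2)^2) := by
          have hterm2 : ∀ m ∈ Icc 1 L, (m:ℝ)^2 * b (2*m) ≤ ((m:ℝ) * (1/P^2)^m) / 2 := by
            intro m hm
            have hm1 : 1 ≤ m := (mem_Icc.mp hm).1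
            have hmR : (1:ℝ) ≤ (m:ℝ) := by exact_mod_cast hm1
            have heq : ((m:ℝ)^2) * (1/(((2*m : ℕ):ℝ)*P^(2*m))) = ((m:ℝ) * (1/P^2)^m) / 2 := by
              rw [div_pow, one_pow, ← pow_mul]
              push_cast
              field_simp
            calc (m:ℝ)^2 * b (2*m) ≤ (m:ℝ)^2 * (1/(((2*m : ℕ):ℝ)*P^(2*m))) := by
                  refine mul_le_mul_of_nonneg_left ?_ (by positivity)
                  rw [hbdef]; linarith
              _ = ((m:ℝ) * (1/P^2)^m) / 2 := heq
          rw [hMdef]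
          calc ∑ m ∈ Icc 1 L, (m:ℝ)^2 * b (2*m)
              ≤ ∑ m ∈ Icc 1 L, ((m:ℝ) * (1/P^2)^m) / 2 := Finset.sum_le_sum hterm2
            _ = (1/2) * ∑ m ∈ Icc 1 L, (m:ℝ) * (1/P^2)^m := by
                rw [Finset.mul_sum]; exact Finset.sum_congr rfl fun m _ => by ring
            _ ≤ (1/2) * ((1/P^2) / (1 - 1/P^2)^2) := by
                have hg := aux_geom_sum (1/P^2) hy1 L
                have h1y : (0:ℝ) < 1 - 1/P^2 := by linarith
                have hrem : 0 ≤ (1/P^2) ^ (L + 1)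
                    * (((L:ℝ) + 1) / (1 - 1/P^2) + (1/P^2) / (1 - 1/P^2) ^ 2) := by positivity
                linarith
        have hpoly := aux_poly3 P hP3
        have h2 : 2*((1/P^2) / (1 - 1/P^2)^2) = 2*(1/P^2)/(1-1/P^2)^2 := by ring
        rw [hb1]
        linarith
    have hrho2 := aux_rho2 u hB
    have key : (1 - (u^2).re) * M ≤ b 1 * (1 - (u^1).re) := by
      rw [hrho2, pow_one]
      nlinarith [mul_nonneg hr0 (by linarith : (0:ℝ) ≤ b 1 - 4*M),
        mul_nonneg (mul_nonneg hr0 hr0) hM0]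
    linarith
  · -- case P = 2, K ≥ 6
    have hL3 : 3 ≤ L := by omega
    have hb2 : b (2*1) = 1/8 - c := by rw [hbdef, hP2]; norm_num
    have hb3 : b 3 = 1/24 - c := by rw [hbdef, hP2]; norm_num
    have hb4 : b (2*2) = 1/64 - c := by rw [hbdef, hP2]; norm_num
    have hb5 : b 5 = 1/160 - c := by rw [hbdef, hP2]; norm_num
    have hb6 : b (2*3) = 1/384 - c := by rw [hbdef, hP2]; norm_num
    have hb1' : b 1 = 1/2 - c := by rw [hb1, hP2]
    have hc384 : c ≤ 1/384 := by
      have := hbK 6 (mem_Icc.mpr ⟨by omega, hK6⟩)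
      have e6 : b 6 = 1/384 - c := by rw [show (6:ℕ) = 2*3 from rfl, hb6]
      rw [e6] at this; linarith
    have hSodd : b 1 * (1 - (u^1).re) + b 3 * (1 - (u^3).re) + b 5 * (1 - (u^5).re)
        ≤ ∑ k ∈ (Icc 1 K).filter (fun k => Odd k), b k * (1 - (u^k).re) := by
      have hsub : ({1,3,5} : Finset ℕ) ⊆ (Icc 1 K).filter (fun k => Odd k) := by
        intro k hk
        simp only [mem_insert, mem_singleton] at hk
        rcases hk with rfl | rfl | rfl <;>
          refine mem_filter.mpr ⟨mem_Icc.mpr ⟨by omega, by omega⟩, ?_⟩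
        · exact odd_one
        · exact ⟨1, by ring⟩
        · exact ⟨2, by ring⟩
      have hval : ∑ k ∈ ({1,3,5} : Finset ℕ), b k * (1 - (u^k).re)
          = b 1 * (1 - (u^1).re) + b 3 * (1 - (u^3).re) + b 5 * (1 - (u^5).re) := by
        rw [Finset.sum_insert (by decide), Finset.sum_insert (by decide), Finset.sum_singleton]
        ring
      rw [← hval]
      exact Finset.sum_le_sum_of_subset_of_nonneg hsub
        (fun i hi _ => mul_nonneg (hbK i (mem_filter.mp hi).1) (hρnn i))
    have hEsplit : ∑ m ∈ Icc 1 L, b (2*m) * (1 - (u^(2*m)).re)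
        = (∑ m ∈ Ioc 0 3, b (2*m) * (1 - (u^(2*m)).re))
          + ∑ m ∈ Ioc 3 L, b (2*m) * (1 - (u^(2*m)).re) := by
      rw [show Icc 1 L = Ioc 0 L by simp [← Finset.Icc_add_one_left_eq_Ioc]]
      rw [Finset.sum_Ioc_consecutive _ (by omega : (0:ℕ) ≤ 3) (by omega : 3 ≤ L)]
    have hhead : ∑ m ∈ Ioc 0 3, b (2*m) * (1 - (u^(2*m)).re)
        = b (2*1) * (1 - (u^2).re) + b (2*2) * (1 - (u^4).re) + b (2*3) * (1 - (u^6).re) := by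
      rw [show (Ioc 0 3 : Finset ℕ) = {1,2,3} by decide]
      rw [Finset.sum_insert (by decide), Finset.sum_insert (by decide), Finset.sum_singleton]
      norm_num
      ring
    have htail : ∑ m ∈ Ioc 3 L, b (2*m) * (1 - (u^(2*m)).re) ≤ (1 - (u^2).re) * (13/1152) := by
      have hbnn' : ∀ m ∈ Ioc 3 L, 0 ≤ b (2*m) := by
        intro m hm
        have := mem_Ioc.mp hm
        exact hbK (2*m) (mem_Icc.mpr ⟨by omega, by omega⟩)
      have step1 : ∑ m ∈ Ioc 3 L, b (2*m) * (1 - (u^(2*m)).re)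
          ≤ (1 - (u^2).re) * ∑ m ∈ Ioc 3 L, (m:ℝ)^2 * b (2*m) := by
        rw [Finset.mul_sum]
        refine Finset.sum_le_sum fun m hm => ?_
        calc b (2*m) * (1 - (u^(2*m)).re) ≤ b (2*m) * ((m:ℝ)^2 * (1 - (u^2).re)) :=
              mul_le_mul_of_nonneg_left (aux_rho_le u hu m) (hbnn' m hm)
          _ = (1 - (u^2).re) * ((m:ℝ)^2 * b (2*m)) := by ring
      have step2 : ∑ m ∈ Ioc 3 L, (m:ℝ)^2 * b (2*m) ≤ 13/1152 := by
        have hterm2 : ∀ m ∈ Ioc 3 L, (m:ℝ)^2 * b (2*m) ≤ ((m:ℝ) * (1/4:ℝ)^m) / 2 := by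
          intro m hm
          have hm1 : 1 ≤ m := by have := mem_Ioc.mp hm; omega
          have heq : ((m:ℝ)^2) * (1/(((2*m : ℕ):ℝ)*(2:ℝ)^(2*m))) = ((m:ℝ) * (1/4:ℝ)^m) / 2 := by
            have h4 : (1/4:ℝ)^m = 1/(2:ℝ)^(2*m) := by
              rw [pow_mul, show ((2:ℝ)^2) = 4 by norm_num, one_div, inv_pow, one_div]
            rw [h4]
            have hmR : (1:ℝ) ≤ (m:ℝ) := by exact_mod_cast hm1
            push_cast
            field_simp
          calc (m:ℝ)^2 * b (2*m) ≤ (m:ℝ)^2 * (1/(((2*m : ℕ):ℝ)*(2:ℝ)^(2*m))) := by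
                refine mul_le_mul_of_nonneg_left ?_ (by positivity)
                rw [hbdef, hP2]; linarith
            _ = ((m:ℝ) * (1/4:ℝ)^m) / 2 := heq
        have hgeo : ∑ m ∈ Ioc 3 L, (m:ℝ) * (1/4:ℝ)^m ≤ 13/576 := by
          have hsplit2 : (∑ m ∈ Ioc (0:ℕ) 3, (m:ℝ) * (1/4:ℝ)^m) + ∑ m ∈ Ioc (3:ℕ) L, (m:ℝ) * (1/4:ℝ)^m
              = ∑ m ∈ Icc 1 L, (m:ℝ) * (1/4:ℝ)^m := by
            rw [show Icc 1 L = Ioc 0 L by simp [← Finset.Icc_add_one_left_eq_Ioc]]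
            exact Finset.sum_Ioc_consecutive _ (by omega) (by omega)
          have hg := aux_geom_sum (1/4) (by norm_num) L
          have hrem : 0 ≤ (1/4:ℝ) ^ (L + 1)
              * (((L:ℝ) + 1) / (1 - 1/4) + (1/4:ℝ) / (1 - 1/4) ^ 2) := by positivity
          have hhead2 : ∑ m ∈ Ioc (0:ℕ) 3, (m:ℝ) * (1/4:ℝ)^m = 27/64 := by
            rw [show (Ioc 0 3 : Finset ℕ) = {1,2,3} by decide]
            rw [Finset.sum_insert (by decide), Finset.sum_insert (by decide), Finset.sum_singleton]
            norm_num
          have he : (1/4:ℝ) / (1 - 1/4)^2 = 4/9 := by norm_num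
          linarith
        calc ∑ m ∈ Ioc 3 L, (m:ℝ)^2 * b (2*m) ≤ ∑ m ∈ Ioc 3 L, ((m:ℝ) * (1/4:ℝ)^m) / 2 :=
              Finset.sum_le_sum hterm2
          _ = (∑ m ∈ Ioc 3 L, (m:ℝ) * (1/4:ℝ)^m) / 2 := by rw [← Finset.sum_div]
          _ ≤ 13/1152 := by linarith
      calc ∑ m ∈ Ioc 3 L, b (2*m) * (1 - (u^(2*m)).re)
          ≤ (1 - (u^2).re) * ∑ m ∈ Ioc 3 L, (m:ℝ)^2 * b (2*m) := step1
        _ ≤ (1 - (u^2).re) * (13/1152) := mul_le_mul_of_nonneg_left step2 (hρnn 2)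
    have i2 := aux_rho2 u hB
    have i3 := aux_rho3 u hB
    have i4 := aux_rho4 u hB
    have i5 := aux_rho5 u hB
    have i6 := aux_rho6 u hB
    have i1 : (1:ℝ) - (u^1).re = 1 - u.re := by rw [pow_one]
    have hpoly := aux_poly2 (1 - u.re) hr0 hr2
    have hkey := mul_nonneg hr0 (sub_nonneg.mpr hpoly)
    have o1 : (191/384 : ℝ) * (1 - (u^1).re) ≤ b 1 * (1 - (u^1).re) :=
      mul_le_mul_of_nonneg_right (by rw [hb1']; linarith) (hρnn 1)
    have o3 : (5/128 : ℝ) * (1 - (u^3).re) ≤ b 3 * (1 - (u^3).re) :=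
      mul_le_mul_of_nonneg_right (by rw [hb3]; linarith) (hρnn 3)
    have o5 : (7/1920 : ℝ) * (1 - (u^5).re) ≤ b 5 * (1 - (u^5).re) :=
      mul_le_mul_of_nonneg_right (by rw [hb5]; linarith) (hρnn 5)
    have e2 : b (2*1) * (1 - (u^2).re) ≤ (1/8 : ℝ) * (1 - (u^2).re) :=
      mul_le_mul_of_nonneg_right (by rw [hb2]; linarith) (hρnn 2)
    have e4 : b (2*2) * (1 - (u^4).re) ≤ (1/64 : ℝ) * (1 - (u^4).re) :=
      mul_le_mul_of_nonneg_right (by rw [hb4]; linarith) (hρnn 4)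
    have e6 : b (2*3) * (1 - (u^6).re) ≤ (1/384 : ℝ) * (1 - (u^6).re) :=
      mul_le_mul_of_nonneg_right (by rw [hb6]; linarith) (hρnn 6)
    linarith [hSodd, hEsplit, hhead, htail, i1, i2, i3, i4, i5, i6, hkey, o1, o3, o5, e2, e4, e6]

set_option maxHeartbeats 1000000 in
theorem stmt_7 (q : ℕ) (χ : DirichletCharacter ℂ q) (x : ℝ) (hx : 100 ≤ x) :
    (∑ n ∈ Finset.Icc 2 ⌊x⌋₊,
        (ArithmeticFunction.vonMangoldt n : ℂ) * χ n
          * ((1 / (n * Real.log n) - 1 / (x * Real.log x) : ℝ) : ℂ)).re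
      ≥ ∑ n ∈ (Finset.Icc 2 ⌊x⌋₊).filter IsPrimePow,
          ArithmeticFunction.vonMangoldt n * (-1) ^ (ArithmeticFunction.cardFactors n)
            * (1 / (n * Real.log n) - 1 / (x * Real.log x)) := by
  have hx0 : (0:ℝ) < x := by linarith
  have hlogx : 0 < Real.log x := Real.log_pos (by linarith)
  have hN100 : 100 ≤ ⌊x⌋₊ := Nat.le_floor (by exact_mod_cast hx)
  have hNx : (⌊x⌋₊ : ℝ) ≤ x := Nat.floor_le hx0.le
  rw [ge_iff_le, ← sub_nonneg]
  rw [Complex.re_sum]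
  have hre : ∀ n ∈ Finset.Icc 2 ⌊x⌋₊,
      ((ArithmeticFunction.vonMangoldt n : ℂ) * χ n
        * ((1 / (n * Real.log n) - 1 / (x * Real.log x) : ℝ) : ℂ)).re
      = (ArithmeticFunction.vonMangoldt n
          * (1 / (n * Real.log n) - 1 / (x * Real.log x))) * (χ n).re := by
    intro n _
    have e : (ArithmeticFunction.vonMangoldt n : ℂ) * χ n
        * ((1 / (n * Real.log n) - 1 / (x * Real.log x) : ℝ) : ℂ)
        = ((ArithmeticFunction.vonMangoldt n
            * (1 / (n * Real.log n) - 1 / (x * Real.log x)) : ℝ) : ℂ) * χ n := by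
      push_cast; ring
    rw [e, Complex.re_ofReal_mul]
  rw [Finset.sum_congr rfl hre]
  rw [← Finset.sum_filter_of_ne (p := IsPrimePow)
    (f := fun n => (ArithmeticFunction.vonMangoldt n
      * (1 / (n * Real.log n) - 1 / (x * Real.log x))) * (χ n).re)
    (by
      intro n _ hne
      by_contra hnot
      have h0 : ArithmeticFunction.vonMangoldt n = 0 :=
        ArithmeticFunction.vonMangoldt_eq_zero_iff.mpr hnot
      exact hne (by simp [h0]))]
  rw [← Finset.sum_sub_distrib]
  have hbody : ∀ n ∈ (Finset.Icc 2 ⌊x⌋₊).filter IsPrimePow,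
      (ArithmeticFunction.vonMangoldt n
        * (1 / (n * Real.log n) - 1 / (x * Real.log x))) * (χ n).re
      - ArithmeticFunction.vonMangoldt n * (-1) ^ (ArithmeticFunction.cardFactors n)
          * (1 / (n * Real.log n) - 1 / (x * Real.log x))
      = ArithmeticFunction.vonMangoldt n * (1 / (n * Real.log n) - 1 / (x * Real.log x))
          * ((χ n).re - (-1:ℝ) ^ (ArithmeticFunction.cardFactors n)) := by
    intro n _; ring
  rw [Finset.sum_congr rfl hbody]
  -- fiberwise over the least prime factor
  have hmaps : ∀ n ∈ (Finset.Icc 2 ⌊x⌋₊).filter IsPrimePow,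
      n.minFac ∈ (⌊x⌋₊ + 1).primesBelow := by
    intro n hn
    obtain ⟨hmem, _⟩ := Finset.mem_filter.mp hn
    obtain ⟨h2, hN⟩ := Finset.mem_Icc.mp hmem
    refine Nat.mem_primesBelow.mpr ⟨?_, Nat.minFac_prime (by omega)⟩
    have := Nat.minFac_le (show 0 < n by omega)
    omega
  rw [← Finset.sum_fiberwise_of_maps_to hmaps]
  refine Finset.sum_nonneg fun p hp => ?_
  have hprime : p.Prime := Nat.prime_of_mem_primesBelow hp
  have hpN : p ≤ ⌊x⌋₊ := by have := Nat.lt_of_mem_primesBelow hp; omega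
  have hp2 : 2 ≤ p := hprime.two_le
  have hpR : (2:ℝ) ≤ (p:ℝ) := by exact_mod_cast hp2
  have hlogp : 0 < Real.log p := Real.log_pos (by exact_mod_cast hprime.one_lt)
  have hNne : ⌊x⌋₊ ≠ 0 := by omega
  -- the fiber is the set of powers of p
  have hfiber : ((Finset.Icc 2 ⌊x⌋₊).filter IsPrimePow).filter (fun n => n.minFac = p)
      = (Finset.Icc 1 (Nat.log p ⌊x⌋₊)).image (fun k => p ^ k) := by
    ext n
    simp only [Finset.mem_filter, Finset.mem_Icc, Finset.mem_image]
    constructor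
    · rintro ⟨⟨⟨h2, hN⟩, hpp⟩, hmin⟩
      obtain ⟨r, k, hr, hk, rfl⟩ := hpp
      have hrp : r.Prime := hr.nat_prime
      have : (r ^ k).minFac = r := hrp.pow_minFac (by omega)
      have hrpeq : r = p := by rw [← this, hmin]
      subst hrpeq
      exact ⟨k, ⟨by omega, (Nat.le_log_iff_pow_le hrp.one_lt hNne).mpr hN⟩, rfl⟩
    · rintro ⟨k, ⟨hk1, hk2⟩, rfl⟩
      have hle : p ^ k ≤ ⌊x⌋₊ := (Nat.le_log_iff_pow_le hprime.one_lt hNne).mp hk2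
      have hge : p ≤ p ^ k := Nat.le_self_pow (by omega) p
      refine ⟨⟨⟨by omega, hle⟩, ⟨p, k, hprime.prime, by omega, rfl⟩⟩, ?_⟩
      exact hprime.pow_minFac (by omega)
  rw [hfiber, Finset.sum_image (fun a _ b _ h => Nat.pow_right_injective hp2 h)]
  -- rewrite each term
  have hK1 : 1 ≤ Nat.log p ⌊x⌋₊ := by
    refine (Nat.le_log_iff_pow_le hprime.one_lt hNne).mpr ?_
    rw [pow_one]; exact hpN
  have hterm : ∀ k ∈ Finset.Icc 1 (Nat.log p ⌊x⌋₊),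
      ArithmeticFunction.vonMangoldt (p ^ k)
        * (1 / ((p ^ k : ℕ) * Real.log (p ^ k : ℕ)) - 1 / (x * Real.log x))
        * (((χ (p ^ k : ℕ)).re - (-1:ℝ) ^ (ArithmeticFunction.cardFactors (p ^ k))))
      = (1 / (k * (p:ℝ) ^ k) - Real.log p / (x * Real.log x))
        * (((χ (p:ℕ)) ^ k).re - (-1:ℝ) ^ k) := by
    intro k hk
    obtain ⟨hk1, _⟩ := Finset.mem_Icc.mp hk
    have hΛ : ArithmeticFunction.vonMangoldt (p ^ k) = Real.log p := by
      rw [ArithmeticFunction.vonMangoldt_apply_pow (by omega),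
        ArithmeticFunction.vonMangoldt_apply_prime hprime]
    have hΩ : ArithmeticFunction.cardFactors (p ^ k) = k :=
      ArithmeticFunction.cardFactors_apply_prime_pow hprime
    have hχ : (χ ((p ^ k : ℕ) : ZMod q)) = (χ (p : ℕ)) ^ k := by
      rw [Nat.cast_pow, map_pow]
    have hcast : ((p ^ k : ℕ) : ℝ) = (p:ℝ) ^ k := by push_cast; ring
    have hkR : (1:ℝ) ≤ (k:ℝ) := by exact_mod_cast hk1
    have hcoef : Real.log p * (1 / ((p:ℝ) ^ k * ((k:ℝ) * Real.log p)) - 1 / (x * Real.log x))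
        = 1 / (k * (p:ℝ) ^ k) - Real.log p / (x * Real.log x) := by
      have h1 : (p:ℝ) ^ k ≠ 0 := by positivity
      have h2 : (k:ℝ) ≠ 0 := by linarith
      have h3 : Real.log p ≠ 0 := ne_of_gt hlogp
      have h4 : x * Real.log x ≠ 0 := by positivity
      field_simp
    rw [hΛ, hΩ, hχ, hcast, Real.log_pow, ← hcoef]
  rw [Finset.sum_congr rfl hterm]
  -- nonnegativity of the coefficients
  have hbK : ∀ k ∈ Finset.Icc 1 (Nat.log p ⌊x⌋₊),
      0 ≤ 1 / (k * (p:ℝ) ^ k) - Real.log p / (x * Real.log x) := by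
    intro k hk
    obtain ⟨hk1, hk2⟩ := Finset.mem_Icc.mp hk
    have hkR : (1:ℝ) ≤ (k:ℝ) := by exact_mod_cast hk1
    have hple : p ^ k ≤ ⌊x⌋₊ := (Nat.le_log_iff_pow_le hprime.one_lt hNne).mp hk2
    have hpkx : (p:ℝ) ^ k ≤ x := by
      have : ((p ^ k : ℕ) : ℝ) ≤ (⌊x⌋₊ : ℝ) := by exact_mod_cast hple
      push_cast at this
      linarith
    have hlogle : (k:ℝ) * Real.log p ≤ Real.log x := by
      rw [← Real.log_pow]
      exact Real.log_le_log (by positivity) hpkx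
    have hmul : (p:ℝ) ^ k * ((k:ℝ) * Real.log p) ≤ x * Real.log x :=
      mul_le_mul hpkx hlogle (by positivity) hx0.le
    rw [sub_nonneg, div_le_div_iff₀ (by positivity) (by positivity)]
    nlinarith [hmul]
  have hc0 : 0 ≤ Real.log p / (x * Real.log x) := by positivity
  -- case on whether χ p vanishes
  by_cases hunit : IsUnit ((p : ℕ) : ZMod q)
  · have hz : ‖χ ((p : ℕ) : ZMod q)‖ = 1 := by
      have := DirichletCharacter.unit_norm_eq_one χ hunit.unit
      rwa [IsUnit.unit_spec] at this
    refine aux_core_unit (p:ℝ) hpR (Nat.log p ⌊x⌋₊) hK1 _ hc0 _ (fun k => rfl) hbK _ hz ?_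
    rcases eq_or_ne p 2 with rfl | hne
    · refine Or.inr ⟨by norm_num, ?_⟩
      refine (Nat.le_log_iff_pow_le (by norm_num) hNne).mpr ?_
      norm_num
      omega
    · refine Or.inl ?_
      have : 3 ≤ p := by
        rcases hprime.eq_two_or_odd with h | h
        · omega
        · omega
      exact_mod_cast this
  · have hz : χ ((p : ℕ) : ZMod q) = 0 := MulChar.map_nonunit χ hunit
    have hzero : ∀ k ∈ Finset.Icc 1 (Nat.log p ⌊x⌋₊),
        (1 / (k * (p:ℝ) ^ k) - Real.log p / (x * Real.log x))
          * (((χ (p:ℕ)) ^ k).re - (-1:ℝ) ^ k)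
        = (1 / (k * (p:ℝ) ^ k) - Real.log p / (x * Real.log x)) * (0 - (-1:ℝ) ^ k) := by
      intro k hk
      obtain ⟨hk1, _⟩ := Finset.mem_Icc.mp hk
      rw [hz, zero_pow (by omega)]
      simp
    rw [Finset.sum_congr rfl hzero]
    exact aux_core_zero (p:ℝ) hpR (Nat.log p ⌊x⌋₊) _ hbK
end

section
/- For a prime p ≥ 3, real θ, and real x ≥ 100, one has (log p)·∑_{1 ≤ k ≤ log x / log p} (−1)^{k−1}·(1 − cos(kθ))·(1/(p^k·log p^k) − 1/(x·log x)) ≥ 0. -/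
open Finset

private lemma abs_sin_nat_mul_le' (n : ℕ) (u : ℝ) : |Real.sin (n * u)| ≤ n * |Real.sin u| := by
  induction n with
  | zero => simp
  | succ m ih =>
    have h : ((m : ℝ) + 1) * u = m * u + u := by ring
    push_cast
    rw [h, Real.sin_add]
    calc |Real.sin (m*u) * Real.cos u + Real.cos (m*u) * Real.sin u|
        ≤ |Real.sin (m*u) * Real.cos u| + |Real.cos (m*u) * Real.sin u| := abs_add_le _ _
      _ ≤ |Real.sin (m*u)| * 1 + 1 * |Real.sin u| := by
          rw [abs_mul, abs_mul]
          gcongr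
          · exact Real.abs_cos_le_one u
          · exact Real.abs_cos_le_one _
      _ ≤ (m:ℝ) * |Real.sin u| + 1 * |Real.sin u| := by
          rw [mul_one]
          have := abs_nonneg (Real.sin u)
          nlinarith [ih]
      _ = ((m:ℝ) + 1) * |Real.sin u| := by ring

private lemma one_sub_cos_nat_mul_le' (k : ℕ) (θ : ℝ) :
    1 - Real.cos (k * θ) ≤ (k : ℝ)^2 * (1 - Real.cos θ) := by
  have key : ∀ α : ℝ, 1 - Real.cos α = 2 * Real.sin (α/2)^2 := by
    intro α
    have h := Real.cos_two_mul' (α/2)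
    have h2 : (2:ℝ) * (α/2) = α := by ring
    rw [h2] at h
    nlinarith [Real.sin_sq_add_cos_sq (α/2)]
  rw [key, key]
  have h1 : (k:ℝ) * θ / 2 = (k:ℝ) * (θ/2) := by ring
  rw [h1]
  have h2 := abs_sin_nat_mul_le' k (θ/2)
  have h3 : Real.sin ((k:ℝ)*(θ/2))^2 ≤ ((k:ℝ) * |Real.sin (θ/2)|)^2 := by
    rw [← sq_abs (Real.sin ((k:ℝ)*(θ/2)))]
    exact pow_le_pow_left₀ (abs_nonneg _) h2 2
  nlinarith [sq_abs (Real.sin (θ/2))]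

private lemma two_mul_le_two_pow' : ∀ j : ℕ, 1 ≤ j → 2*j ≤ 2^j := by
  intro j hj
  induction j with
  | zero => omega
  | succ m ih =>
    rcases Nat.eq_or_lt_of_le hj with h | h
    · have : m = 0 := by omega
      subst this; norm_num
    · have hm : 1 ≤ m := by omega
      have h1 := ih hm
      have h2 : 2 ≤ 2^m := by
        calc 2 = 2^1 := rfl
          _ ≤ 2^m := Nat.pow_le_pow_right (by norm_num) hm
      calc 2*(m+1) = 2*m + 2 := by ring
        _ ≤ 2^m + 2^m := by omega
        _ = 2^(m+1) := by ring

private lemma geom_Icc_le' {s : ℝ} (h0 : 0 ≤ s) (h1 : s < 1) (m : ℕ) :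
    ∑ j ∈ Icc 1 m, s^j ≤ s/(1-s) := by
  have hden : 0 < 1 - s := by linarith
  rw [← Finset.Ico_add_one_right_eq_Icc, Finset.sum_Ico_eq_sum_range]
  show ∑ i ∈ Finset.range (m + 1 - 1), s^(1+i) ≤ s/(1-s)
  simp only [Nat.add_sub_cancel]
  have hgs : ∑ i ∈ Finset.range m, s^i ≤ 1/(1-s) := by
    rw [geom_sum_eq (ne_of_lt h1)]
    have : (s^m - 1)/(s-1) = (1 - s^m)/(1-s) := by
      rw [← neg_sub (1:ℝ) (s^m), ← neg_sub (1:ℝ) s, neg_div_neg_eq]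
    rw [this]
    gcongr
    nlinarith [pow_nonneg h0 m]
  calc ∑ i ∈ Finset.range m, s^(1+i) = s * ∑ i ∈ Finset.range m, s^i := by
        rw [Finset.mul_sum]
        exact Finset.sum_congr rfl (fun i _ => by rw [pow_add, pow_one])
    _ ≤ s * (1/(1-s)) := mul_le_mul_of_nonneg_left hgs h0
    _ = s/(1-s) := by ring

private lemma numeric_core' (p : ℕ) (hp3 : 3 ≤ p) (x : ℝ) (hx : 100 ≤ x)
    (hpx : (p:ℝ)^2 ≤ x) :
    2/((p:ℝ)^2 - 2) ≤ 1/(p:ℝ) - Real.log p / (x * Real.log x) := by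
  have hq3 : (3:ℝ) ≤ (p:ℝ) := by exact_mod_cast hp3
  have hq0 : (0:ℝ) < (p:ℝ) := by linarith
  have hlp : 0 < Real.log p := Real.log_pos (by linarith)
  have hlx : 0 < Real.log x := Real.log_pos (by linarith)
  rcases (by omega : p = 3 ∨ 4 ≤ p) with h3 | h4
  · subst h3
    have hl2 : 0 < Real.log 2 := Real.log_pos (by norm_num)
    have hl3 : Real.log 3 ≤ 2 * Real.log 2 := by
      calc Real.log 3 ≤ Real.log 4 := Real.log_le_log (by norm_num) (by norm_num)
        _ = 2 * Real.log 2 := by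
            rw [show (4:ℝ) = 2^2 by norm_num, Real.log_pow]; norm_num
    have hl100 : 6 * Real.log 2 ≤ Real.log 100 := by
      calc 6 * Real.log 2 = Real.log (2^6) := by rw [Real.log_pow]; norm_num
        _ ≤ Real.log 100 := Real.log_le_log (by positivity) (by norm_num)
    have hxx : 100 * (6 * Real.log 2) ≤ x * Real.log x := by
      have h1 : Real.log 100 ≤ Real.log x := Real.log_le_log (by norm_num) hx
      nlinarith
    have hpos : (0:ℝ) < 100 * (6 * Real.log 2) := by positivity
    have hfrac : Real.log 3 / (x * Real.log x) ≤ (2 * Real.log 2) / (100 * (6 * Real.log 2)) := by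
      apply div_le_div₀ (by positivity) _ hpos hxx
      push_cast
      exact hl3
    have heq : (2 * Real.log 2) / (100 * (6 * Real.log 2)) = 1/300 := by
      rw [div_eq_div_iff (by positivity) (by norm_num)]
      ring
    push_cast at hfrac ⊢
    rw [heq] at hfrac
    norm_num
    linarith
  · have hq4 : (4:ℝ) ≤ (p:ℝ) := by exact_mod_cast h4
    have h2L : 2 * Real.log p ≤ Real.log x := by
      calc 2 * Real.log p = Real.log ((p:ℝ)^2) := by rw [Real.log_pow]; norm_num
        _ ≤ Real.log x := Real.log_le_log (by positivity) hpx
    have hxpos : (0:ℝ) < (p:ℝ)^2 * (2 * Real.log p) := by positivity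
    have hxl : (p:ℝ)^2 * (2 * Real.log p) ≤ x * Real.log x := by
      apply mul_le_mul hpx h2L (by positivity) (by linarith)
    have hfrac : Real.log p / (x * Real.log x) ≤ Real.log p / ((p:ℝ)^2 * (2 * Real.log p)) := by
      exact div_le_div_of_nonneg_left hlp.le hxpos hxl
    have heq : Real.log p / ((p:ℝ)^2 * (2 * Real.log p)) = 1/(2*(p:ℝ)^2) := by
      rw [div_eq_div_iff (by positivity) (by positivity)]
      ring
    rw [heq] at hfrac
    have hstep : 2/((p:ℝ)^2 - 2) ≤ 1/(p:ℝ) - 1/(2*(p:ℝ)^2) := by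
      have hd1 : (0:ℝ) < (p:ℝ)^2 - 2 := by nlinarith
      have e1 : 1/(p:ℝ) - 1/(2*(p:ℝ)^2) = (2*(p:ℝ)-1)/(2*(p:ℝ)^2) := by
        field_simp
      rw [e1, div_le_div_iff₀ hd1 (by positivity)]
      nlinarith
    linarith

theorem stmt_8 (p : ℕ) (hp : p.Prime) (hp3 : 3 ≤ p) (θ : ℝ) (x : ℝ) (hx : 100 ≤ x) :
    Real.log p *
      ∑ k ∈ Finset.Icc 1 ⌊Real.log x / Real.log p⌋₊,
        (-1 : ℝ) ^ (k - 1) * (1 - Real.cos (k * θ))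
          * (1 / ((p : ℝ) ^ k * Real.log ((p : ℝ) ^ k)) - 1 / (x * Real.log x))
      ≥ 0 := by
  have hq3 : (3:ℝ) ≤ (p:ℝ) := by exact_mod_cast hp3
  have hq0 : (0:ℝ) < (p:ℝ) := by linarith
  have hL : 0 < Real.log p := Real.log_pos (by linarith)
  have hx1 : (1:ℝ) < x := by linarith
  have hlx : 0 < Real.log x := Real.log_pos hx1
  set L := Real.log (p:ℝ) with hLdef
  have hLne : L ≠ 0 := ne_of_gt hL
  set n := ⌊Real.log x / L⌋₊ with hn
  apply mul_nonneg hL.le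
  rcases Nat.eq_zero_or_pos n with h0 | hn1
  · rw [h0]; simp
  set c := 1 - Real.cos θ with hcdef
  have hc0 : 0 ≤ c := by have := Real.cos_le_one θ; simp only [hcdef]; linarith
  -- p^k ≤ x for k ≤ n
  have hpk : ∀ k : ℕ, k ≤ n → (p:ℝ)^k ≤ x := by
    intro k hk
    have h1 : (k:ℝ) ≤ Real.log x / L := by
      calc (k:ℝ) ≤ (n:ℝ) := by exact_mod_cast hk
        _ ≤ _ := Nat.floor_le (div_nonneg hlx.le hL.le)
    have h2 : (k:ℝ) * L ≤ Real.log x := (le_div_iff₀ hL).1 h1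
    have h3 : Real.log ((p:ℝ)^k) ≤ Real.log x := by
      rw [Real.log_pow, ← hLdef]; exact h2
    have h4 := Real.exp_le_exp.2 h3
    rwa [Real.exp_log (by positivity), Real.exp_log (by linarith)] at h4
  -- nonnegativity of the a-factor
  have hak : ∀ k : ℕ, 1 ≤ k → k ≤ n →
      0 ≤ 1/((p:ℝ)^k * Real.log ((p:ℝ)^k)) - 1/(x * Real.log x) := by
    intro k hk1 hkn
    have hpkx := hpk k hkn
    have hppos : (0:ℝ) < (p:ℝ)^k := by positivity
    have hk1' : (0:ℝ) < (k:ℝ) := by exact_mod_cast hk1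
    have hlpk : Real.log ((p:ℝ)^k) = k * L := by rw [Real.log_pow, ← hLdef]
    have hlpk0 : 0 < Real.log ((p:ℝ)^k) := by rw [hlpk]; positivity
    have hlog : Real.log ((p:ℝ)^k) ≤ Real.log x := Real.log_le_log hppos hpkx
    have hmle : (p:ℝ)^k * Real.log ((p:ℝ)^k) ≤ x * Real.log x :=
      mul_le_mul hpkx hlog hlpk0.le (by linarith)
    have h5 := one_div_le_one_div_of_le
      (show (0:ℝ) < (p:ℝ)^k * Real.log ((p:ℝ)^k) by positivity) hmle
    linarith
  -- the lower-bound function g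
  set g : ℕ → ℝ := fun k =>
    if k = 1 then c * (1/((p:ℝ) * L) - 1/(x * Real.log x))
    else if Even k then -(c * k / (L * (p:ℝ)^k)) else 0 with hgdef
  have hterm : ∀ k ∈ Finset.Icc 1 n, g k ≤
      (-1 : ℝ) ^ (k - 1) * (1 - Real.cos (k * θ))
        * (1 / ((p : ℝ) ^ k * Real.log ((p : ℝ) ^ k)) - 1 / (x * Real.log x)) := by
    intro k hk
    rw [Finset.mem_Icc] at hk
    obtain ⟨hk1, hkn⟩ := hk
    have hik := hak k hk1 hkn
    have hk1' : (0:ℝ) < (k:ℝ) := by exact_mod_cast hk1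
    have hkne : (k:ℝ) ≠ 0 := ne_of_gt hk1'
    have hppos : (0:ℝ) < (p:ℝ)^k := by positivity
    have hpne : ((p:ℝ)^k) ≠ 0 := ne_of_gt hppos
    have hlpk : Real.log ((p:ℝ)^k) = k * L := by rw [Real.log_pow, ← hLdef]
    have hcos : 1 - Real.cos ((k:ℝ) * θ) ≤ (k:ℝ)^2 * c := by
      rw [hcdef]; exact one_sub_cos_nat_mul_le' k θ
    have hcosnn : 0 ≤ 1 - Real.cos ((k:ℝ) * θ) := by
      have := Real.cos_le_one ((k:ℝ) * θ); linarith
    rcases Nat.even_or_odd k with he | ho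
    · -- even k
      have hne1 : k ≠ 1 := by rintro rfl; exact Nat.not_even_one he
      have hodd : Odd (k - 1) := Nat.Even.sub_odd hk1 he odd_one
      rw [hodd.neg_one_pow]
      simp only [hgdef, if_neg hne1, if_pos he]
      rw [neg_one_mul, neg_mul, neg_le_neg_iff]
      have step2 : 1/((p:ℝ)^k * Real.log ((p:ℝ)^k)) - 1/(x * Real.log x)
          ≤ 1/((p:ℝ)^k * ((k:ℝ) * L)) := by
        rw [hlpk]
        have : 0 < 1/(x * Real.log x) := by positivity
        linarith
      calc (1 - Real.cos ((k:ℝ) * θ))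
            * (1/((p:ℝ)^k * Real.log ((p:ℝ)^k)) - 1/(x * Real.log x))
          ≤ ((k:ℝ)^2 * c) * (1/((p:ℝ)^k * Real.log ((p:ℝ)^k)) - 1/(x * Real.log x)) :=
            mul_le_mul_of_nonneg_right hcos hik
        _ ≤ ((k:ℝ)^2 * c) * (1/((p:ℝ)^k * ((k:ℝ) * L))) := by
            apply mul_le_mul_of_nonneg_left step2 (by positivity)
        _ = c * k / (L * (p:ℝ)^k) := by
            field_simp
    · -- odd k
      have heven : Even (k - 1) := Nat.Odd.sub_odd ho odd_one
      rw [heven.neg_one_pow, one_mul]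
      by_cases hk1eq : k = 1
      · subst hk1eq
        have hgval : g 1 = c * (1/((p:ℝ) * L) - 1/(x * Real.log x)) := by
          simp [hgdef]
        rw [hgval]
        simp only [Nat.cast_one, one_mul, pow_one]
        rw [← hLdef, ← hcdef]
      · have hnotev : ¬ Even k := by
          rw [Nat.even_iff]; rw [Nat.odd_iff] at ho; omega
        simp only [hgdef, if_neg hk1eq, if_neg hnotev]
        exact mul_nonneg hcosnn hik
  -- sum lower bound
  have hsum := Finset.sum_le_sum hterm
  refine le_trans ?_ hsum
  -- split off k = 1
  have h1mem : (1:ℕ) ∈ Finset.Icc 1 n := Finset.mem_Icc.2 ⟨le_refl 1, hn1⟩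
  rw [← Finset.add_sum_erase _ g h1mem, Finset.Icc_erase_left]
  have hIoc : Finset.Ioc 1 n = Finset.Icc 2 n := (Finset.Icc_add_one_left_eq_Ioc 1 n).symm
  rw [hIoc]
  have hg1 : g 1 = c * (1/((p:ℝ) * L) - 1/(x * Real.log x)) := by simp [hgdef]
  set E := ∑ k ∈ Finset.Icc 2 n, (if Even k then (k:ℝ)/(p:ℝ)^k else 0) with hEdef
  have hgE : ∑ k ∈ Finset.Icc 2 n, g k = -(c/L) * E := by
    rw [hEdef, Finset.mul_sum]
    apply Finset.sum_congr rfl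
    intro k hk
    rw [Finset.mem_Icc] at hk
    have hne1 : k ≠ 1 := by omega
    have hpne : ((p:ℝ)^k) ≠ 0 := by positivity
    simp only [hgdef, if_neg hne1]
    split_ifs with he
    · field_simp
    · ring
  rw [hgE, hg1]
  -- nonnegativity of a₁
  have ha1 : 0 ≤ 1/((p:ℝ) * L) - 1/(x * Real.log x) := by
    have h := hak 1 le_rfl hn1
    rw [pow_one] at h
    rwa [← hLdef] at h
  rcases Nat.lt_or_ge n 2 with hn2 | hn2
  · -- n = 1 : E is an empty sum
    have hempty : Finset.Icc 2 n = ∅ := by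
      apply Finset.Icc_eq_empty; omega
    rw [hEdef, hempty]
    simp only [Finset.sum_empty, mul_zero, add_zero]
    exact mul_nonneg hc0 ha1
  · -- n ≥ 2
    have hp2x : (p:ℝ)^2 ≤ x := hpk 2 hn2
    have hq2 : (2:ℝ) < (p:ℝ)^2 := by nlinarith
    -- bound E
    have hE0 : E ≤ 2/((p:ℝ)^2 - 2) := by
      rw [hEdef, ← Finset.sum_filter]
      have hbij : ∑ k ∈ (Finset.Icc 2 n).filter (fun k => Even k), (k:ℝ)/(p:ℝ)^k
          = ∑ j ∈ Finset.Icc 1 (n/2), ((2*j : ℕ):ℝ)/(p:ℝ)^(2*j) := by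
        apply Finset.sum_nbij' (fun k => k/2) (fun j => 2*j)
        · intro a ha
          simp only [Finset.mem_filter, Finset.mem_Icc] at ha
          rw [Finset.mem_Icc]
          obtain ⟨⟨h2a, han⟩, hea⟩ := ha
          exact ⟨by omega, Nat.div_le_div_right han⟩
        · intro a ha
          rw [Finset.mem_Icc] at ha
          simp only [Finset.mem_filter, Finset.mem_Icc]
          refine ⟨⟨by omega, ?_⟩, even_two_mul a⟩
          have := (Nat.le_div_iff_mul_le (by norm_num : 0 < 2)).1 ha.2
          omega
        · intro a ha
          simp only [Finset.mem_filter] at ha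
          exact Nat.two_mul_div_two_of_even ha.2
        · intro a _
          omega
        · intro a ha
          simp only [Finset.mem_filter] at ha
          rw [Nat.two_mul_div_two_of_even ha.2]
      rw [hbij]
      have hstep : ∑ j ∈ Finset.Icc 1 (n/2), ((2*j : ℕ):ℝ)/(p:ℝ)^(2*j)
          ≤ ∑ j ∈ Finset.Icc 1 (n/2), (2/(p:ℝ)^2)^j := by
        apply Finset.sum_le_sum
        intro j hj
        rw [Finset.mem_Icc] at hj
        have h2j := two_mul_le_two_pow' j hj.1
        have h2j' : ((2*j:ℕ):ℝ) ≤ (2:ℝ)^j := by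
          calc ((2*j:ℕ):ℝ) ≤ ((2^j : ℕ):ℝ) := by exact_mod_cast h2j
            _ = (2:ℝ)^j := by push_cast; ring
        rw [div_pow, ← pow_mul]
        gcongr
      refine hstep.trans ?_
      have hs0 : (0:ℝ) ≤ 2/(p:ℝ)^2 := by positivity
      have hs1 : 2/(p:ℝ)^2 < 1 := by
        rw [div_lt_one (by positivity)]; exact hq2
      refine (geom_Icc_le' hs0 hs1 (n/2)).trans ?_
      have hd : (0:ℝ) < (p:ℝ)^2 - 2 := by linarith
      have hd2 : (0:ℝ) < 1 - 2/(p:ℝ)^2 := by linarith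
      rw [div_le_div_iff₀ hd2 hd]
      have hp2 : ((p:ℝ)^2) ≠ 0 := by positivity
      field_simp
      exact le_refl 1
    have hE1 : 0 ≤ E := by
      rw [hEdef]
      apply Finset.sum_nonneg
      intro k _
      split_ifs
      · positivity
      · exact le_refl 0
    have hnum := numeric_core' p hp3 x hx hp2x
    rw [← hLdef] at hnum
    have h1 : (c/L) * E ≤ (c/L) * (2/((p:ℝ)^2 - 2)) :=
      mul_le_mul_of_nonneg_left hE0 (div_nonneg hc0 hL.le)
    have h2 : (c/L) * (2/((p:ℝ)^2 - 2)) ≤ (c/L) * (1/(p:ℝ) - L/(x * Real.log x)) :=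
      mul_le_mul_of_nonneg_left hnum (div_nonneg hc0 hL.le)
    have hxlne : x * Real.log x ≠ 0 := by positivity
    have hpne0 : (p:ℝ) ≠ 0 := ne_of_gt hq0
    have heq : (c/L) * (1/(p:ℝ) - L/(x * Real.log x))
        = c * (1/((p:ℝ) * L) - 1/(x * Real.log x)) := by
      field_simp
    rw [heq] at h2
    linarith
end

section
/- For real u > 0 and any 0 < c < 1, the contour integral (1/2πi)∫_{(c)} −(Γ(s) + Γ(−s))·u^s ds equals 1 − e^{−1/u} − e^{−u}; in particular this quantity is strictly positive for all u > 0. -/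
open MeasureTheory Complex

open Set Filter Asymptotics Topology

lemma gamma_norm_le {s : ℂ} (hs : 0 < s.re) : ‖Complex.Gamma s‖ ≤ Real.Gamma s.re := by
  rw [Complex.Gamma_eq_integral hs, Real.Gamma_eq_integral hs, Complex.GammaIntegral]
  calc ‖∫ x in Ioi (0:ℝ), ↑(Real.exp (-x)) * (x:ℂ) ^ (s - 1)‖
      ≤ ∫ x in Ioi (0:ℝ), ‖(↑(Real.exp (-x)) : ℂ) * (x:ℂ) ^ (s - 1)‖ :=
        norm_integral_le_integral_norm _
    _ ≤ ∫ x in Ioi (0:ℝ), Real.exp (-x) * x ^ (s.re - 1) := by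
        apply le_of_eq
        apply setIntegral_congr_fun measurableSet_Ioi
        intro x hx
        simp only [norm_mul, Complex.norm_real, Real.norm_eq_abs,
          Complex.norm_cpow_eq_rpow_re_of_pos hx, Complex.sub_re, Complex.one_re,
          _root_.abs_of_nonneg (Real.exp_pos _).le]

lemma gamma_vint {σ : ℝ} (h0 : 0 < |σ|) (h1 : |σ| < 1) :
    Integrable (fun t : ℝ => Complex.Gamma (σ + t * I)) := by
  set a : ℝ := |σ| * (1 - |σ|) with ha_def
  have ha : 0 < a := mul_pos h0 (by linarith)
  have ha1 : a ≤ 1 := by nlinarith [abs_nonneg σ]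
  have hσ1 : -1 < σ := by cases' abs_lt.mp h1 with h h; linarith
  have hσlt : σ < 1 := (abs_lt.mp h1).2
  -- continuity
  have hcont : Continuous fun t : ℝ => Complex.Gamma (σ + t * I) := by
    rw [continuous_iff_continuousAt]
    intro t
    apply (Complex.differentiableAt_Gamma _ ?_).continuousAt.comp (by fun_prop)
    intro m hm
    have : (σ : ℂ).re + ((t:ℂ) * I).re = (-(m:ℂ)).re := by rw [← Complex.add_re, hm]
    simp only [Complex.ofReal_re, Complex.mul_I_re, Complex.ofReal_im, neg_zero, add_zero,
      Complex.neg_re, Complex.natCast_re] at this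
    rcases Nat.eq_zero_or_pos m with rfl | hm'
    · simp at this; rw [this] at h0; simp at h0
    · have : σ ≤ -1 := by
        rw [this]; simp only [neg_le_neg_iff]; exact_mod_cast hm'
      linarith
  -- pointwise bound
  have hbound : ∀ t : ℝ, ‖Complex.Gamma (σ + t * I)‖ ≤
      (2 * Real.Gamma (σ + 3) / a) * (1 + t ^ 2)⁻¹ := by
    intro t
    set s : ℂ := σ + t * I with hs_def
    have hre : s.re = σ := by simp [hs_def]
    have him : s.im = t := by simp [hs_def]
    have hns : s ≠ 0 := fun h => by rw [h] at hre; simp at hre; rw [← hre] at h0; simp at h0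
    have hns1 : s + 1 ≠ 0 := fun h => by
      have := congrArg Complex.re h; simp [hre] at this; linarith
    have hns2 : s + 2 ≠ 0 := fun h => by
      have := congrArg Complex.re h; simp [hre] at this; linarith
    have key : Complex.Gamma (s + 3) = (s + 2) * ((s + 1) * (s * Complex.Gamma s)) := by
      rw [show s + 3 = (s + 2) + 1 from by ring, Complex.Gamma_add_one _ hns2,
        show s + 2 = (s + 1) + 1 from by ring, Complex.Gamma_add_one _ hns1,
        Complex.Gamma_add_one _ hns]
    have hnorm3 : ‖Complex.Gamma (s + 3)‖ ≤ Real.Gamma (σ + 3) := by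
      have : (s + 3).re = σ + 3 := by simp [hre]
      rw [← this]
      exact gamma_norm_le (by rw [this]; linarith)
    have hDt : |t| ≤ ‖s‖ ∧ |t| ≤ ‖s + 1‖ := by
      constructor
      · simpa [him] using Complex.abs_im_le_norm s
      · have : (s+1).im = t := by simp [him]
        simpa [this] using Complex.abs_im_le_norm (s+1)
    have hD1 : |σ| ≤ ‖s‖ := by simpa [hre] using Complex.abs_re_le_norm s
    have hD2 : 1 - |σ| ≤ ‖s + 1‖ := by
      have h' := Complex.abs_re_le_norm (s+1)
      have : (s+1).re = σ + 1 := by simp [hre]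
      rw [this] at h'
      have : 1 - |σ| ≤ |σ + 1| := by
        cases' abs_cases σ with h h <;> cases' abs_cases (σ+1) with h' h' <;> linarith
      linarith
    have hD3 : 1 ≤ ‖s + 2‖ := by
      have h' := Complex.abs_re_le_norm (s+2)
      have : (s+2).re = σ + 2 := by simp [hre]
      rw [this] at h'
      have : 1 ≤ |σ + 2| := by cases' abs_cases (σ+2) with h' h' <;> linarith
      linarith
    have hpos : (0:ℝ) < ‖s‖ * ‖s+1‖ * ‖s+2‖ := by
      have := norm_pos_iff.mpr hns
      have := norm_pos_iff.mpr hns1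
      have := norm_pos_iff.mpr hns2
      positivity
    have hprod_a : a ≤ ‖s‖ * ‖s+1‖ * ‖s+2‖ := by
      have h1' : a ≤ ‖s‖ * ‖s+1‖ := by
        calc a = |σ| * (1 - |σ|) := rfl
        _ ≤ ‖s‖ * ‖s+1‖ := by
            apply mul_le_mul hD1 hD2 (by linarith) (norm_nonneg _)
      nlinarith [norm_nonneg (s+2)]
    have hprod_t : t ^ 2 ≤ ‖s‖ * ‖s+1‖ * ‖s+2‖ := by
      have : t^2 = |t| * |t| := by rw [← abs_mul, sq, abs_mul_self]
      rw [this]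
      calc |t| * |t| ≤ ‖s‖ * ‖s+1‖ := mul_le_mul hDt.1 hDt.2 (abs_nonneg t) (norm_nonneg _)
        _ ≤ ‖s‖ * ‖s+1‖ * ‖s+2‖ := le_mul_of_one_le_right (by positivity) hD3
    have hDlower : a * (1 + t^2) ≤ 2 * (‖s‖ * ‖s+1‖ * ‖s+2‖) := by
      rcases le_or_gt (t^2) 1 with h | h
      · nlinarith
      · nlinarith
    have hGs : ‖s‖ * ‖s+1‖ * ‖s+2‖ * ‖Complex.Gamma s‖ = ‖Complex.Gamma (s + 3)‖ := by
      rw [key, norm_mul, norm_mul, norm_mul]; ring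
    have hGpos : 0 < Real.Gamma (σ + 3) := Real.Gamma_pos_of_pos (by linarith)
    have ht2 : (0:ℝ) < 1 + t^2 := by positivity
    have hrhs : (2 * Real.Gamma (σ + 3) / a) * (1 + t ^ 2)⁻¹
        = (2 * Real.Gamma (σ + 3)) / (a * (1 + t ^ 2)) := by
      field_simp
    rw [hrhs, le_div_iff₀ (by positivity)]
    nlinarith [norm_nonneg (Complex.Gamma s), hnorm3, hDlower, hpos,
      mul_le_mul_of_nonneg_left hDlower (norm_nonneg (Complex.Gamma s))]
  exact (integrable_inv_one_add_sq.const_mul _).mono' hcont.aestronglyMeasurable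
    (Filter.Eventually.of_forall fun t => by
      simpa [norm_mul, abs_of_pos (show (0:ℝ) < (1+t^2)⁻¹ by positivity)] using hbound t)

lemma mellin_exp_conv {s : ℂ} (hs : 0 < s.re) :
    MellinConvergent (fun x : ℝ => (Real.exp (-x) : ℂ)) s := by
  apply (Complex.GammaIntegral_convergent hs).congr_fun ?_ measurableSet_Ioi
  intro x _
  simp [smul_eq_mul, mul_comm]

lemma mellin_exp_eq {s : ℂ} (hs : 0 < s.re) :
    mellin (fun x : ℝ => (Real.exp (-x) : ℂ)) s = Complex.Gamma s := by
  rw [Complex.Gamma_eq_integral hs, Complex.GammaIntegral, mellin]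
  apply setIntegral_congr_fun measurableSet_Ioi
  intro x _
  simp [smul_eq_mul, mul_comm]

lemma mellin_exp_sub_one_conv {s : ℂ} (hs0 : -1 < s.re) (hs1 : s.re < 0) :
    MellinConvergent (fun x : ℝ => (Real.exp (-x) : ℂ) - 1) s := by
  apply mellinConvergent_of_isBigO_rpow (a := 0) (b := -1)
  · exact ContinuousOn.locallyIntegrableOn (Continuous.continuousOn (by fun_prop)) measurableSet_Ioi
  · apply IsBigO.of_bound 2
    filter_upwards [eventually_gt_atTop (0:ℝ)] with x hx
    have h1 : ‖(Real.exp (-x) : ℂ) - 1‖ ≤ 2 := by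
      calc ‖(Real.exp (-x) : ℂ) - 1‖ ≤ ‖(Real.exp (-x) : ℂ)‖ + ‖(1:ℂ)‖ := norm_sub_le _ _
        _ ≤ 2 := by
            simp only [Complex.norm_real, Real.norm_eq_abs, norm_one,
              _root_.abs_of_nonneg (Real.exp_pos (-x)).le]
            have := Real.exp_le_one_iff.mpr (by linarith : -x ≤ 0)
            linarith
    calc ‖(Real.exp (-x) : ℂ) - 1‖ ≤ 2 := h1
      _ = 2 * ‖x ^ (-(0:ℝ))‖ := by
          rw [Real.rpow_neg hx.le, Real.rpow_zero]; simp
  · exact hs1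
  · apply IsBigO.of_bound 1
    filter_upwards [self_mem_nhdsWithin] with x (hx : 0 < x)
    have hb : ‖(Real.exp (-x) : ℂ) - 1‖ = 1 - Real.exp (-x) := by
      rw [show ((Real.exp (-x) : ℝ) : ℂ) - 1 = ((Real.exp (-x) - 1 : ℝ) : ℂ) by push_cast; ring,
        Complex.norm_real, Real.norm_eq_abs, abs_of_nonpos (by
          have := Real.exp_le_one_iff.mpr (by linarith : -x ≤ 0); linarith)]
      ring
    rw [hb]
    have h2 : 1 - Real.exp (-x) ≤ x := by
      have := Real.add_one_le_exp (-x); linarith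
    calc 1 - Real.exp (-x) ≤ x := h2
      _ = 1 * ‖x ^ (-(-1:ℝ))‖ := by
          rw [neg_neg, Real.rpow_one, one_mul, Real.norm_eq_abs, abs_of_pos hx]
  · linarith

lemma norm_exp_sub_one_le {x : ℝ} (hx : 0 ≤ x) :
    ‖(Real.exp (-x) : ℂ) - 1‖ ≤ x ∧ ‖(Real.exp (-x) : ℂ) - 1‖ ≤ 2 := by
  have he1 : Real.exp (-x) ≤ 1 := Real.exp_le_one_iff.mpr (by linarith)
  have hb : ‖(Real.exp (-x) : ℂ) - 1‖ = 1 - Real.exp (-x) := by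
    rw [show ((Real.exp (-x) : ℝ) : ℂ) - 1 = ((Real.exp (-x) - 1 : ℝ) : ℂ) by push_cast; ring,
      Complex.norm_real, Real.norm_eq_abs, abs_of_nonpos (by linarith)]
    ring
  have h2 := Real.add_one_le_exp (-x)
  have h3 := Real.exp_pos (-x)
  exact ⟨by rw [hb]; linarith, by rw [hb]; linarith⟩

lemma mellin_exp_sub_one_eq {s : ℂ} (hs0 : -1 < s.re) (hs1 : s.re < 0) :
    mellin (fun x : ℝ => (Real.exp (-x) : ℂ) - 1) s = Complex.Gamma s := by
  have hsne : s ≠ 0 := fun h => by rw [h] at hs1; simp at hs1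
  have hsnorm : (0:ℝ) < ‖s‖ := norm_pos_iff.mpr hsne
  set F : ℝ → ℂ := fun x => ((Real.exp (-x) : ℂ) - 1) * ((x:ℂ) ^ s / s) with hF
  set F' : ℝ → ℂ := fun x =>
    (-(Real.exp (-x)) : ℂ) * ((x:ℂ) ^ s / s) + ((Real.exp (-x) : ℂ) - 1) * (x:ℂ) ^ (s-1)
    with hF'
  have hderiv : ∀ x ∈ Ioi (0:ℝ), HasDerivAt F (F' x) x := by
    intro x hx
    have hd1 : HasDerivAt (fun x : ℝ => ((Real.exp (-x) : ℂ) - 1)) (-(Real.exp (-x)) : ℂ) x := by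
      have : HasDerivAt (fun x : ℝ => Real.exp (-x)) (-Real.exp (-x)) x := by
        simpa [Function.comp_def] using (Real.hasDerivAt_exp (-x)).comp x (hasDerivAt_neg x)
      simpa using (this.ofReal_comp).sub_const 1
    have hd2 : HasDerivAt (fun x : ℝ => (x:ℂ) ^ s / s) ((x:ℂ) ^ (s-1)) x := by
      have h := hasDerivAt_ofReal_cpow_const' (ne_of_gt (mem_Ioi.mp hx)) (r := s - 1)
        (by intro h; apply hsne; linear_combination h)
      simpa using h
    exact hd1.mul hd2
  have hBint : IntegrableOn
      (fun x : ℝ => ((Real.exp (-x) : ℂ) - 1) * (x:ℂ) ^ (s-1)) (Ioi 0) := by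
    apply (mellin_exp_sub_one_conv hs0 hs1).congr_fun ?_ measurableSet_Ioi
    intro x _; simp [smul_eq_mul, mul_comm]
  have hAint : IntegrableOn
      (fun x : ℝ => (-(Real.exp (-x)) : ℂ) * ((x:ℂ) ^ s / s)) (Ioi 0) := by
    have h := Complex.GammaIntegral_convergent (s := s + 1) (by simp; linarith)
    simp only [add_sub_cancel_right] at h
    apply IntegrableOn.congr_fun ((h.div_const s).neg) ?_ measurableSet_Ioi
    intro x _
    simp only [Pi.neg_apply]
    push_cast; ring
  have hint : IntegrableOn F' (Ioi 0) := hAint.add hBint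
  -- continuity at 0
  have hF0 : F 0 = 0 := by simp [hF]
  have hcont : ContinuousWithinAt F (Ici 0) 0 := by
    rw [ContinuousWithinAt, hF0]
    apply squeeze_zero_norm' (a := fun x => x ^ (s.re + 1) / ‖s‖)
    · filter_upwards [self_mem_nhdsWithin] with x (hx : x ∈ Ici (0:ℝ))
      rcases eq_or_lt_of_le (mem_Ici.mp hx) with h | h
      · rw [← h]
        simp only [hF]
        rw [show ((Real.exp (-(0:ℝ)) : ℂ) - 1) = 0 by simp]
        rw [Real.zero_rpow (by linarith)]
        simp
      · simp only [hF, norm_mul, norm_div]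
        rw [Complex.norm_cpow_eq_rpow_re_of_pos h]
        rw [Real.rpow_add_one (ne_of_gt h)]
        have h1 := (norm_exp_sub_one_le (le_of_lt h)).1
        rw [mul_comm (x ^ s.re) x, mul_div_assoc]
        apply mul_le_mul h1 le_rfl (by positivity) (le_of_lt h)
    · have hc : ContinuousWithinAt (fun x : ℝ => x ^ (s.re + 1) / ‖s‖) (Ici 0) 0 :=
        ((Real.continuousAt_rpow_const 0 (s.re+1)
          (Or.inr (by linarith))).continuousWithinAt).div_const _
      have h0 : (0:ℝ) ^ (s.re + 1) / ‖s‖ = 0 := by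
        rw [Real.zero_rpow (by linarith : s.re + 1 ≠ 0)]; simp
      rw [ContinuousWithinAt] at hc
      simp only [h0] at hc
      exact hc
  -- limit at infinity
  have htop : Tendsto F atTop (𝓝 0) := by
    apply squeeze_zero_norm' (a := fun x => (2 / ‖s‖) * x ^ s.re)
    · filter_upwards [eventually_gt_atTop (0:ℝ)] with x hx
      simp only [hF, norm_mul, norm_div]
      rw [Complex.norm_cpow_eq_rpow_re_of_pos hx]
      have h1 := (norm_exp_sub_one_le hx.le).2
      rw [div_mul_eq_mul_div, mul_comm (2:ℝ) (x ^ s.re), ← mul_div_assoc, mul_comm (x ^ s.re)]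
      gcongr
    · have : Tendsto (fun x : ℝ => x ^ s.re) atTop (𝓝 0) := by
        have := tendsto_rpow_neg_atTop (y := -s.re) (by linarith)
        simpa using this
      simpa using (this.const_mul (2 / ‖s‖))
  -- FTC
  have hibp : ∫ x in Ioi (0:ℝ), F' x = 0 - F 0 :=
    integral_Ioi_of_hasDerivAt_of_tendsto hcont hderiv hint htop
  rw [hF0, sub_zero] at hibp
  have hsplit : (∫ x in Ioi (0:ℝ), F' x)
      = (∫ x in Ioi (0:ℝ), (-(Real.exp (-x)) : ℂ) * ((x:ℂ) ^ s / s))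
        + ∫ x in Ioi (0:ℝ), ((Real.exp (-x) : ℂ) - 1) * (x:ℂ) ^ (s-1) :=
    integral_add hAint hBint
  have hB_eq : (∫ x in Ioi (0:ℝ), ((Real.exp (-x) : ℂ) - 1) * (x:ℂ) ^ (s-1))
      = mellin (fun x : ℝ => (Real.exp (-x) : ℂ) - 1) s := by
    rw [mellin]
    apply setIntegral_congr_fun measurableSet_Ioi
    intro x _; simp [smul_eq_mul, mul_comm]
  have hA_eq : (∫ x in Ioi (0:ℝ), (-(Real.exp (-x)) : ℂ) * ((x:ℂ) ^ s / s))
      = -(Complex.GammaIntegral (s+1) / s) := by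
    rw [Complex.GammaIntegral, ← integral_div, ← integral_neg]
    apply setIntegral_congr_fun measurableSet_Ioi
    intro x _
    push_cast
    rw [add_sub_cancel_right]
    ring
  rw [hsplit, hA_eq, hB_eq] at hibp
  have : mellin (fun x : ℝ => (Real.exp (-x) : ℂ) - 1) s = Complex.GammaIntegral (s+1) / s := by
    linear_combination hibp
  rw [this, ← Complex.Gamma_eq_integral (by simp; linarith), Complex.Gamma_add_one s hsne]
  field_simp

theorem stmt_13 (u : ℝ) (hu : 0 < u) (c : ℝ) (hc0 : 0 < c) (hc1 : c < 1) :
    (1 / (2 * Real.pi * Complex.I)) *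
        ∫ t : ℝ, -(Complex.Gamma (c + Complex.I * t) + Complex.Gamma (-(c + Complex.I * t)))
            * (u : ℂ) ^ ((c : ℂ) + Complex.I * t) * Complex.I
      = 1 - Complex.exp (-(1 / u)) - Complex.exp (-u) ∧
    0 < 1 - Real.exp (-(1 / u)) - Real.exp (-u) := by
  constructor
  · have huC : (u : ℂ) ≠ 0 := ofReal_ne_zero.mpr hu.ne'
    have hcpow : ∀ w : ℂ, (((1/u : ℝ)) : ℂ) ^ (-w) = (u : ℂ) ^ w := by
      intro w
      rw [one_div, ofReal_inv,
        inv_cpow _ _ (by rw [Complex.arg_ofReal_of_nonneg hu.le]; exact Real.pi_ne_zero.symm),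
        ← cpow_neg, neg_neg]
    have hcpow_norm : ∀ w : ℂ, w.re = c → ‖(u:ℂ) ^ w‖ = u ^ c := by
      intro w hw
      rw [Complex.norm_cpow_eq_rpow_re_of_pos hu, hw]
    have hcpow_cont : Continuous fun t : ℝ => (u:ℂ) ^ ((c:ℂ) + I * t) :=
      Continuous.const_cpow (by fun_prop) (Or.inl huC)
    -- first integral: Gamma on the line re = c
    have hg1 : Integrable (fun t : ℝ => Complex.Gamma ((c:ℂ) + I * t)) := by
      apply (gamma_vint (σ := c) (by rwa [abs_of_pos hc0]) (by rwa [abs_of_pos hc0])).congr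
      exact Eventually.of_forall fun t => congrArg _ (by ring)
    have hint1 : Integrable (fun t : ℝ => (u:ℂ) ^ ((c:ℂ) + I * t)
        * Complex.Gamma ((c:ℂ) + I * t)) := by
      apply hg1.bdd_mul hcpow_cont.aestronglyMeasurable
      exact Eventually.of_forall fun t => le_of_eq (hcpow_norm _ (by simp))
    have hg2 : Integrable (fun t : ℝ => Complex.Gamma (-((c:ℂ) + I * t))) := by
      have h := gamma_vint (σ := -c) (by rwa [abs_neg, abs_of_pos hc0])
        (by rwa [abs_neg, abs_of_pos hc0])
      apply h.comp_neg.congr (Eventually.of_forall fun t => congrArg _ ?_)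
      push_cast
      ring
    have hint2 : Integrable (fun t : ℝ => (u:ℂ) ^ ((c:ℂ) + I * t)
        * Complex.Gamma (-((c:ℂ) + I * t))) := by
      apply hg2.bdd_mul hcpow_cont.aestronglyMeasurable
      exact Eventually.of_forall fun t => le_of_eq (hcpow_norm _ (by simp))
    -- split the integral
    have hsplit : (∫ t : ℝ, -(Complex.Gamma ((c:ℂ) + I * t) + Complex.Gamma (-((c:ℂ) + I * t)))
            * (u : ℂ) ^ ((c : ℂ) + I * t) * I)
        = (-I) * ((∫ t : ℝ, (u:ℂ) ^ ((c:ℂ) + I * t) * Complex.Gamma ((c:ℂ) + I * t))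
          + ∫ t : ℝ, (u:ℂ) ^ ((c:ℂ) + I * t) * Complex.Gamma (-((c:ℂ) + I * t))) := by
      rw [← integral_add hint1 hint2, ← integral_const_mul]
      exact integral_congr_ae (Eventually.of_forall fun t => by ring)
    -- Mellin inversion for exp(-x) at 1/u
    have hu1 : (0:ℝ) < 1/u := by positivity
    have hvert1 : Complex.VerticalIntegrable
        (mellin fun x : ℝ => (Real.exp (-x) : ℂ)) c := by
      apply (gamma_vint (σ := c) (by rwa [abs_of_pos hc0]) (by rwa [abs_of_pos hc0])).congr
      exact Eventually.of_forall fun t => (mellin_exp_eq (by simp [hc0])).symm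
    have E1 := mellinInv_mellin_eq c (fun x : ℝ => (Real.exp (-x) : ℂ)) hu1
      (mellin_exp_conv (by simpa using hc0)) hvert1 (by fun_prop)
    beta_reduce at E1
    rw [mellinInv] at E1
    have E1' : (∫ t : ℝ, (u:ℂ) ^ ((c:ℂ) + I * t) * Complex.Gamma ((c:ℂ) + I * t))
        = (2 * Real.pi : ℝ) • (Real.exp (-(1/u)) : ℂ) := by
      rw [← E1, smul_smul, show (2 * Real.pi : ℝ) * (1 / (2 * Real.pi)) = 1 by
        field_simp, one_smul]
      apply integral_congr_ae (Eventually.of_forall fun t => ?_)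
      show (u:ℂ) ^ ((c:ℂ) + I * t) * Complex.Gamma ((c:ℂ) + I * t)
        = (((1/u : ℝ)) : ℂ) ^ (-((c:ℂ) + (t:ℂ) * I)) • mellin (fun x : ℝ => (Real.exp (-x) : ℂ))
          ((c:ℂ) + (t:ℂ) * I)
      rw [mellin_exp_eq (by simp [hc0]), hcpow ((c:ℂ) + (t:ℂ) * I), smul_eq_mul,
        show (c:ℂ) + I * (t:ℂ) = (c:ℂ) + (t:ℂ) * I by ring]
    -- Mellin inversion for exp(-x) - 1 at u
    have hvert2 : Complex.VerticalIntegrable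
        (mellin fun x : ℝ => (Real.exp (-x) : ℂ) - 1) (-c) := by
      apply (gamma_vint (σ := -c) (by rwa [abs_neg, abs_of_pos hc0])
        (by rwa [abs_neg, abs_of_pos hc0])).congr
      refine Eventually.of_forall fun t => (mellin_exp_sub_one_eq ?_ ?_).symm
      · simp; linarith
      · simp [hc0]
    have E2 := mellinInv_mellin_eq (-c) (fun x : ℝ => (Real.exp (-x) : ℂ) - 1) hu
      (mellin_exp_sub_one_conv (by simp; linarith) (by simp [hc0])) hvert2 (by fun_prop)
    beta_reduce at E2
    rw [mellinInv] at E2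
    have E2' : (∫ t : ℝ, (u:ℂ) ^ ((c:ℂ) + I * t) * Complex.Gamma (-((c:ℂ) + I * t)))
        = (2 * Real.pi : ℝ) • ((Real.exp (-u) : ℂ) - 1) := by
      rw [← E2, smul_smul, show (2 * Real.pi : ℝ) * (1 / (2 * Real.pi)) = 1 by
        field_simp, one_smul]
      rw [← integral_neg_eq_self
        (fun t : ℝ => (u:ℂ) ^ ((c:ℂ) + I * t) * Complex.Gamma (-((c:ℂ) + I * t))) volume]
      apply integral_congr_ae (Eventually.of_forall fun t => ?_)
      show (u:ℂ) ^ ((c:ℂ) + I * ((-t : ℝ) : ℂ)) * Complex.Gamma (-((c:ℂ) + I * ((-t : ℝ) : ℂ)))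
        = ((u : ℝ) : ℂ) ^ (-(((-c : ℝ) : ℂ) + (t:ℂ) * I))
          • mellin (fun x : ℝ => (Real.exp (-x) : ℂ) - 1) (((-c : ℝ) : ℂ) + (t:ℂ) * I)
      rw [mellin_exp_sub_one_eq (by simp; linarith) (by simp [hc0]), smul_eq_mul]
      have e1 : ((c:ℂ) + I * ((-t : ℝ) : ℂ)) = -((((-c : ℝ)) : ℂ) + (t:ℂ) * I) := by
        push_cast; ring
      rw [e1, neg_neg]
    rw [hsplit, E1', E2']
    have c1 : ((Real.exp (-(1/u)) : ℝ) : ℂ) = Complex.exp (-(1/(u:ℂ))) := by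
      rw [show (-(1/(u:ℂ))) = ((-(1/u) : ℝ) : ℂ) by push_cast; ring, Complex.ofReal_exp]
    have c2 : ((Real.exp (-u) : ℝ) : ℂ) = Complex.exp (-(u:ℂ)) := by
      rw [show (-(u:ℂ)) = ((-u : ℝ) : ℂ) by push_cast; rfl, Complex.ofReal_exp]
    rw [← c1, ← c2]
    simp only [real_smul, Complex.ofReal_mul, Complex.ofReal_ofNat]
    have hπ : (Real.pi : ℂ) ≠ 0 := ofReal_ne_zero.mpr Real.pi_ne_zero
    field_simp [Complex.I_ne_zero]
    ring_nf
  · have ha := Real.add_one_lt_exp hu.ne'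
    have hu1 : (1:ℝ)/u ≠ 0 := by positivity
    have hb := Real.add_one_lt_exp hu1
    have hA : Real.exp (-u) < (1+u)⁻¹ := by
      rw [Real.exp_neg]
      exact inv_strictAnti₀ (by linarith) (by linarith)
    have hB : Real.exp (-(1/u)) < (1+1/u)⁻¹ := by
      rw [Real.exp_neg]
      have : (0:ℝ) < 1/u := by positivity
      exact inv_strictAnti₀ (by linarith) (by linarith)
    have hsum : (1+u)⁻¹ + (1+1/u)⁻¹ = 1 := by
      rw [show (1:ℝ)+1/u = (1+u)/u by field_simp; ring]
      rw [inv_div]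
      field_simp
    linarith
end
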